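/- Let V_max > 0, u ∈ [0,V_max), P ∈ [0,1), σ ≥ 0. Let η be a compactly supported Borel probability measure on ℝ with ∫ ξ dη(ξ) = 0 and ∫ ξ² dη(ξ) = σ². Let Δ_B : [u,V_max] → ℝ be continuous, let f : [u,V_max] → ℝ be nonnegative and integrable, and let φ : ℝ → ℝ be twice continuously differentiable with φ″ Lipschitz continuous. For ε ∈ (0,1) and (v*, ξ) ∈ [u,V_max] × ℝ set v_ε(v*, ξ) = v* − √(ε(1 − P))·Δ_B(v*)·(√(ε(1 − P)) + ξ). Then lim_{ε→0⁺} (1/ε)·∫_ℝ ∫ᵤ^{V_max} (φ(v_ε(v*, ξ)) − φ(v*))·f(v*) dv* dη(ξ) = −(1 − P)·∫ᵤ^{V_max} Δ_B(v*)·φ′(v*)·f(v*) dv* + (σ²(1 − P)/2)·∫ᵤ^{V_max} Δ_B(v*)²·φ″(v*)·f(v*) dv*. -/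

import Mathlib

open MeasureTheory Filter Real
set_option maxHeartbeats 1600000

section aux

lemma mvt_bound {g g' : ℝ → ℝ} (hg : ∀ x, HasDerivAt g (g' x) x) {t M : ℝ}
    (hM : ∀ s ∈ Set.uIcc (0:ℝ) t, |g' s| ≤ M) (hg0 : g 0 = 0)
    {s : ℝ} (hs : s ∈ Set.uIcc (0:ℝ) t) : |g s| ≤ M * |s| := by
  have hconv : Convex ℝ (Set.uIcc (0:ℝ) t) := by
    rw [Set.uIcc]; exact convex_Icc _ _
  have := hconv.norm_image_sub_le_of_norm_hasDerivWithin_le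
    (fun x hx => (hg x).hasDerivWithinAt) (fun x hx => hM x hx)
    (Set.left_mem_uIcc) hs
  simpa [hg0] using this

lemma abs_le_of_mem_uIcc {s t : ℝ} (hs : s ∈ Set.uIcc (0:ℝ) t) : |s| ≤ |t| := by
  rw [Set.uIcc, Set.mem_Icc] at hs
  rcases hs with ⟨h1, h2⟩
  rcases le_or_gt 0 t with h | h
  · rw [min_eq_left h, max_eq_right h] at *
    rw [abs_of_nonneg h1, abs_of_nonneg h]; exact h2
  · rw [min_eq_right h.le, max_eq_left h.le] at *
    rw [abs_of_nonpos h2, abs_of_neg h]; linarith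

lemma taylor_bound {φ φ' φ'' : ℝ → ℝ} {L : NNReal}
    (hφ' : ∀ x, HasDerivAt φ (φ' x) x) (hφ'' : ∀ x, HasDerivAt φ' (φ'' x) x)
    (hlip : LipschitzWith L φ'') (x t : ℝ) :
    |φ (x - t) - φ x + t * φ' x - t ^ 2 / 2 * φ'' x| ≤ L * |t| ^ 3 := by
  set ψ : ℝ → ℝ := fun s => φ (x - s) - φ x + s * φ' x - s ^ 2 / 2 * φ'' x with hψ
  set ψ' : ℝ → ℝ := fun s => -φ' (x - s) + φ' x - s * φ'' x with hψ'
  have hdψ : ∀ s, HasDerivAt ψ (ψ' s) s := by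
    intro s
    have h1 : HasDerivAt (fun s : ℝ => x - s) (-1) s := by
      simpa using (hasDerivAt_id s).const_sub x
    have h2 : HasDerivAt (fun s => φ (x - s)) (φ' (x - s) * (-1)) s :=
      (hφ' (x - s)).comp s h1
    have h3 : HasDerivAt (fun s : ℝ => s * φ' x) (φ' x) s := by
      simpa using (hasDerivAt_id s).mul_const (φ' x)
    have h4 : HasDerivAt (fun s : ℝ => s ^ 2 / 2 * φ'' x) (s * φ'' x) s := by
      have : HasDerivAt (fun s : ℝ => s ^ 2 / 2) s s := by
        simpa using ((hasDerivAt_pow 2 s).div_const 2)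
      simpa using this.mul_const (φ'' x)
    have := ((h2.sub_const (φ x)).add h3).sub h4
    rw [show ψ' s = φ' (x - s) * -1 + φ' x - s * φ'' x by simp only [hψ']; ring]
    exact this
  have hdψ' : ∀ s, HasDerivAt ψ' (φ'' (x - s) - φ'' x) s := by
    intro s
    have h1 : HasDerivAt (fun s : ℝ => x - s) (-1) s := by
      simpa using (hasDerivAt_id s).const_sub x
    have h2 : HasDerivAt (fun s => φ' (x - s)) (φ'' (x - s) * (-1)) s :=
      (hφ'' (x - s)).comp s h1
    have h3 : HasDerivAt (fun s : ℝ => s * φ'' x) (φ'' x) s := by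
      simpa using (hasDerivAt_id s).mul_const (φ'' x)
    have := (h2.neg.add_const (φ' x)).sub h3
    rw [show φ'' (x - s) - φ'' x = -(φ'' (x - s) * -1) - φ'' x by ring]
    exact this
  have hbd2 : ∀ s ∈ Set.uIcc (0:ℝ) t, |φ'' (x - s) - φ'' x| ≤ L * |t| := by
    intro s hs
    have := hlip.dist_le_mul (x - s) x
    rw [Real.dist_eq, Real.dist_eq] at this
    calc |φ'' (x - s) - φ'' x| ≤ L * |x - s - x| := this
    _ = L * |s| := by rw [abs_sub_comm]; ring_nf
    _ ≤ L * |t| := by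
      exact mul_le_mul_of_nonneg_left (abs_le_of_mem_uIcc hs) (by positivity)
  have hψ'0 : ψ' 0 = 0 := by simp [hψ']
  have hbd1 : ∀ s ∈ Set.uIcc (0:ℝ) t, |ψ' s| ≤ (L * |t|) * |t| := by
    intro s hs
    calc |ψ' s| ≤ (L * |t|) * |s| := mvt_bound hdψ' hbd2 hψ'0 hs
    _ ≤ (L * |t|) * |t| := mul_le_mul_of_nonneg_left (abs_le_of_mem_uIcc hs) (by positivity)
  have hψ0 : ψ 0 = 0 := by simp [hψ]
  have := mvt_bound hdψ hbd1 hψ0 (Set.right_mem_uIcc (a := (0:ℝ)) (b := t))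
  calc |φ (x - t) - φ x + t * φ' x - t ^ 2 / 2 * φ'' x| = |ψ t| := rfl
  _ ≤ L * |t| * |t| * |t| := this
  _ = L * |t| ^ 3 := by ring

lemma inner_decomp {u Vmax : ℝ} {Δ φ φ' φ'' f : ℝ → ℝ}
    (hΔ : Continuous Δ) (hφc : Continuous φ) (hφ'c : Continuous φ') (hφ''c : Continuous φ'')
    (hf : IntervalIntegrable f volume u Vmax) (a : ℝ) :
    ∫ v in u..Vmax, (φ (v - a * Δ v) - φ v) * f v
      = -a * (∫ v in u..Vmax, Δ v * φ' v * f v)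
        + a ^ 2 / 2 * (∫ v in u..Vmax, Δ v ^ 2 * φ'' v * f v)
        + ∫ v in u..Vmax,
            (φ (v - a * Δ v) - φ v + a * Δ v * φ' v - (a * Δ v) ^ 2 / 2 * φ'' v) * f v := by
  have h1 : IntervalIntegrable (fun v => Δ v * φ' v * f v) volume u Vmax :=
    hf.continuousOn_mul ((hΔ.mul hφ'c).continuousOn)
  have h2 : IntervalIntegrable (fun v => Δ v ^ 2 * φ'' v * f v) volume u Vmax :=
    hf.continuousOn_mul (((hΔ.pow 2).mul hφ''c).continuousOn)
  have hRc : Continuous (fun v => φ (v - a * Δ v) - φ v + a * Δ v * φ' v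
      - (a * Δ v) ^ 2 / 2 * φ'' v) := by
    fun_prop
  have h3 : IntervalIntegrable (fun v =>
      (φ (v - a * Δ v) - φ v + a * Δ v * φ' v - (a * Δ v) ^ 2 / 2 * φ'' v) * f v)
      volume u Vmax := hf.continuousOn_mul hRc.continuousOn
  have key : (fun v => (φ (v - a * Δ v) - φ v) * f v)
      = fun v => (-a) * (Δ v * φ' v * f v) + ((a ^ 2 / 2) * (Δ v ^ 2 * φ'' v * f v)
        + (φ (v - a * Δ v) - φ v + a * Δ v * φ' v - (a * Δ v) ^ 2 / 2 * φ'' v) * f v) := by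
    funext v; ring
  rw [key, intervalIntegral.integral_add (h1.const_mul (-a)) ((h2.const_mul (a ^ 2 / 2)).add h3),
    intervalIntegral.integral_add (h2.const_mul (a ^ 2 / 2)) h3,
    intervalIntegral.integral_const_mul, intervalIntegral.integral_const_mul]
  ring

end aux

/-- Grazing collision limit of the braking part of the Boltzmann-type traffic model:
as `ε → 0⁺`, the rescaled collision kernel converges to the drift–diffusion terms
`−(1−P) ∫ Δ_B φ′ f + (σ²(1−P)/2) ∫ Δ_B² φ″ f` of the Fokker-Planck model. -/
theorem grazing_limit_braking (Vmax u P σ : ℝ) (hV : 0 < Vmax)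
    (hu : u ∈ Set.Ico (0 : ℝ) Vmax) (hP : P ∈ Set.Ico (0 : ℝ) 1) (hσ : 0 ≤ σ)
    (η : Measure ℝ) [IsProbabilityMeasure η]
    (hsupp : ∃ C : ℝ, ∀ᵐ ξ ∂η, |ξ| ≤ C)
    (hmean : ∫ ξ, ξ ∂η = 0) (hvar : ∫ ξ, ξ ^ 2 ∂η = σ ^ 2)
    (ΔB : ℝ → ℝ) (hΔB : ContinuousOn ΔB (Set.Icc u Vmax))
    (f : ℝ → ℝ) (hf_nonneg : ∀ v ∈ Set.Icc u Vmax, 0 ≤ f v)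
    (hf_int : IntervalIntegrable f volume u Vmax)
    (φ φ' φ'' : ℝ → ℝ) (hφ' : ∀ x, HasDerivAt φ (φ' x) x)
    (hφ'' : ∀ x, HasDerivAt φ' (φ'' x) x) (hφ''cont : Continuous φ'')
    (hφ''lip : ∃ L : NNReal, LipschitzWith L φ'') :
    Tendsto (fun ε : ℝ =>
        1 / ε * ∫ ξ, (∫ v in u..Vmax,
          (φ (v - Real.sqrt (ε * (1 - P)) * ΔB v * (Real.sqrt (ε * (1 - P)) + ξ)) - φ v)
            * f v) ∂η)
      (nhdsWithin 0 (Set.Ioi 0))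
      (nhds (-(1 - P) * (∫ v in u..Vmax, ΔB v * φ' v * f v)
        + σ ^ 2 * (1 - P) / 2 * ∫ v in u..Vmax, ΔB v ^ 2 * φ'' v * f v)) := by
  obtain ⟨hu0, huV⟩ := hu
  obtain ⟨hP0, hP1⟩ := hP
  obtain ⟨L, hlip⟩ := hφ''lip
  obtain ⟨C₀, hC₀⟩ := hsupp
  have huV' : u ≤ Vmax := huV.le
  set C := max C₀ 0 with hCdef
  have hCae : ∀ᵐ ξ ∂η, |ξ| ≤ C := hC₀.mono fun ξ h => le_trans h (le_max_left _ _)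
  have hC0 : (0:ℝ) ≤ C := le_max_right _ _
  set c := 1 - P with hcdef
  have hc0 : 0 < c := by simp only [hcdef]; linarith
  have hc1 : c ≤ 1 := by simp only [hcdef]; linarith
  -- continuous extension of ΔB
  set Δ : ℝ → ℝ := fun v => ΔB (min (max v u) Vmax) with hΔdef
  have hclamp : ∀ v : ℝ, min (max v u) Vmax ∈ Set.Icc u Vmax := by
    intro v
    exact ⟨le_min (le_max_right v u) huV', min_le_right _ _⟩
  have hΔcont : Continuous Δ := by
    apply hΔB.comp_continuous
    · exact (continuous_id.max continuous_const).min continuous_const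
    · exact hclamp
  have hΔeq : ∀ v ∈ Set.Icc u Vmax, Δ v = ΔB v := by
    intro v hv
    simp only [hΔdef]
    rw [max_eq_left hv.1, min_eq_left hv.2]
  -- bound on Δ
  obtain ⟨M₀, hM₀⟩ := isCompact_Icc.exists_bound_of_continuousOn hΔB
  set M := max M₀ 0 with hMdef
  have hM0 : (0:ℝ) ≤ M := le_max_right _ _
  have hM : ∀ v : ℝ, |Δ v| ≤ M := by
    intro v
    have := hM₀ _ (hclamp v)
    rw [Real.norm_eq_abs] at this
    exact le_trans this (le_max_left _ _)
  -- continuity of φ, φ'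
  have hφc : Continuous φ := Differentiable.continuous fun x => (hφ' x).differentiableAt
  have hφ'c : Continuous φ' := Differentiable.continuous fun x => (hφ'' x).differentiableAt
  -- the integrals
  set A := ∫ v in u..Vmax, Δ v * φ' v * f v with hAdef
  set B := ∫ v in u..Vmax, Δ v ^ 2 * φ'' v * f v with hBdef
  have hAeq : (∫ v in u..Vmax, ΔB v * φ' v * f v) = A := by
    rw [hAdef]
    apply intervalIntegral.integral_congr
    intro v hv
    rw [Set.uIcc_of_le huV'] at hv
    simp only [hΔeq v hv]
  have hBeq : (∫ v in u..Vmax, ΔB v ^ 2 * φ'' v * f v) = B := by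
    rw [hBdef]
    apply intervalIntegral.integral_congr
    intro v hv
    rw [Set.uIcc_of_le huV'] at hv
    simp only [hΔeq v hv]
  rw [hAeq, hBeq]
  set F := ∫ v in u..Vmax, |f v| with hFdef
  have hF0 : 0 ≤ F := intervalIntegral.integral_nonneg huV' fun v _ => abs_nonneg _
  set K : ℝ := (L : ℝ) * M ^ 3 * F * (1 + C) ^ 3 * c + |c ^ 2 * B / 2| with hKdef
  -- remainder bound
  have Rb : ∀ a : ℝ, |∫ v in u..Vmax,
      (φ (v - a * Δ v) - φ v + a * Δ v * φ' v - (a * Δ v) ^ 2 / 2 * φ'' v) * f v|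
      ≤ (L : ℝ) * M ^ 3 * F * |a| ^ 3 := by
    intro a
    have hRc : Continuous (fun v => φ (v - a * Δ v) - φ v + a * Δ v * φ' v
        - (a * Δ v) ^ 2 / 2 * φ'' v) := by fun_prop
    have hint : IntervalIntegrable (fun v =>
        |(φ (v - a * Δ v) - φ v + a * Δ v * φ' v - (a * Δ v) ^ 2 / 2 * φ'' v) * f v|)
        volume u Vmax := (hf_int.continuousOn_mul hRc.continuousOn).abs
    refine le_trans (intervalIntegral.abs_integral_le_integral_abs huV') ?_
    have hmono := intervalIntegral.integral_mono_on huV' hint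
      (hf_int.abs.const_mul ((L : ℝ) * M ^ 3 * |a| ^ 3)) ?_
    · refine le_trans hmono ?_
      rw [intervalIntegral.integral_const_mul]
      apply le_of_eq
      rw [← hFdef]
      ring
    · intro v _
      rw [abs_mul]
      have ht := taylor_bound hφ' hφ'' hlip v (a * Δ v)
      have h1 : |a * Δ v| ^ 3 ≤ |a| ^ 3 * M ^ 3 := by
        rw [abs_mul, mul_pow]
        exact mul_le_mul_of_nonneg_left (pow_le_pow_left₀ (abs_nonneg _) (hM v) 3)
          (by positivity)
      calc |φ (v - a * Δ v) - φ v + a * Δ v * φ' v - (a * Δ v) ^ 2 / 2 * φ'' v| * |f v|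
          ≤ ((L : ℝ) * |a * Δ v| ^ 3) * |f v| :=
            mul_le_mul_of_nonneg_right ht (abs_nonneg _)
        _ ≤ ((L : ℝ) * (|a| ^ 3 * M ^ 3)) * |f v| := by
            refine mul_le_mul_of_nonneg_right ?_ (abs_nonneg _)
            exact mul_le_mul_of_nonneg_left h1 (by positivity)
        _ = ((L : ℝ) * M ^ 3 * |a| ^ 3) * |f v| := by ring
  -- the key quantitative estimate
  have key : ∀ ε : ℝ, 0 < ε → ε < 1 →
      |1 / ε * (∫ ξ, (∫ v in u..Vmax,
          (φ (v - Real.sqrt (ε * c) * ΔB v * (Real.sqrt (ε * c) + ξ)) - φ v) * f v) ∂η)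
        - (-c * A + σ ^ 2 * c / 2 * B)| ≤ K * Real.sqrt ε := by
    intro ε hε1 hε2
    set h := Real.sqrt (ε * c) with hhdef
    have hh0 : 0 ≤ h := Real.sqrt_nonneg _
    have hh2 : h ^ 2 = ε * c := Real.sq_sqrt (by positivity)
    have hh1 : h ≤ 1 := by
      rw [hhdef]
      refine Real.sqrt_le_one.mpr ?_
      calc ε * c ≤ 1 * 1 := by
            exact mul_le_mul hε2.le hc1 hc0.le zero_le_one
        _ = 1 := one_mul 1
    have hhe : h ≤ Real.sqrt ε := by
      rw [hhdef]
      exact Real.sqrt_le_sqrt (mul_le_of_le_one_right hε1.le hc1)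
    have hse : Real.sqrt ε ≤ 1 := Real.sqrt_le_one.mpr hε2.le
    have hεe : ε ≤ Real.sqrt ε := by
      calc ε = Real.sqrt ε * Real.sqrt ε := (Real.mul_self_sqrt hε1.le).symm
        _ ≤ Real.sqrt ε * 1 := mul_le_mul_of_nonneg_left hse (Real.sqrt_nonneg ε)
        _ = Real.sqrt ε := mul_one _
    set k0 : ℝ := -h ^ 2 * A + h ^ 4 * B / 2 with hk0
    set k1 : ℝ := -h * A + h ^ 3 * B with hk1
    set k2 : ℝ := h ^ 2 * B / 2 with hk2
    set I : ℝ → ℝ := fun ξ => ∫ v in u..Vmax,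
      (φ (v - h * ΔB v * (h + ξ)) - φ v) * f v with hIdef
    have hr : ∀ ξ : ℝ, |I ξ - (k0 + k1 * ξ + k2 * ξ ^ 2)|
        ≤ ((L : ℝ) * M ^ 3 * F * h ^ 3) * |h + ξ| ^ 3 := by
      intro ξ
      have e1 : I ξ = ∫ v in u..Vmax, (φ (v - (h * (h + ξ)) * Δ v) - φ v) * f v := by
        simp only [hIdef]
        apply intervalIntegral.integral_congr
        intro v hv
        rw [Set.uIcc_of_le huV'] at hv
        simp only [hΔeq v hv]
        ring_nf
      have e2 := inner_decomp hΔcont hφc hφ'c hφ''cont hf_int (h * (h + ξ))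
      rw [← hAdef, ← hBdef] at e2
      rw [e1, e2]
      have e3 : -(h * (h + ξ)) * A + (h * (h + ξ)) ^ 2 / 2 * B
          + (∫ v in u..Vmax, (φ (v - h * (h + ξ) * Δ v) - φ v + h * (h + ξ) * Δ v * φ' v
              - (h * (h + ξ) * Δ v) ^ 2 / 2 * φ'' v) * f v)
          - (k0 + k1 * ξ + k2 * ξ ^ 2)
          = ∫ v in u..Vmax, (φ (v - h * (h + ξ) * Δ v) - φ v + h * (h + ξ) * Δ v * φ' v
              - (h * (h + ξ) * Δ v) ^ 2 / 2 * φ'' v) * f v := by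
        rw [hk0, hk1, hk2]
        ring
      rw [e3]
      refine le_trans (Rb (h * (h + ξ))) (le_of_eq ?_)
      rw [abs_mul, abs_of_nonneg hh0, mul_pow]
      ring
    -- measurability of I
    have hImeas : AEStronglyMeasurable I η := by
      have heq : I = fun ξ => ∫ v in Set.Ioc u Vmax,
          (φ (v - h * Δ v * (h + ξ)) - φ v) * f v ∂volume := by
        funext ξ
        simp only [hIdef]
        rw [intervalIntegral.integral_of_le huV']
        refine setIntegral_congr_fun measurableSet_Ioc fun v hv => ?_
        simp only [hΔeq v (Set.Ioc_subset_Icc_self hv)]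
      rw [heq]
      have hfae : AEStronglyMeasurable f (volume.restrict (Set.Ioc u Vmax)) :=
        hf_int.1.aestronglyMeasurable
      have hfm : AEStronglyMeasurable (fun p : ℝ × ℝ => f p.2)
          (η.prod (volume.restrict (Set.Ioc u Vmax))) :=
        hfae.comp_quasiMeasurePreserving Measure.quasiMeasurePreserving_snd
      have hgc : Continuous (fun p : ℝ × ℝ => φ (p.2 - h * Δ p.2 * (h + p.1)) - φ p.2) := by
        fun_prop
      exact (hgc.aestronglyMeasurable.mul hfm).integral_prod_right'
    -- integrability over η
    have hxi : Integrable (fun ξ : ℝ => ξ) η := by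
      refine Integrable.mono' (integrable_const C) aestronglyMeasurable_id ?_
      filter_upwards [hCae] with ξ hξ
      simpa [Real.norm_eq_abs] using hξ
    have hxi2 : Integrable (fun ξ : ℝ => ξ ^ 2) η := by
      refine Integrable.mono' (integrable_const (C ^ 2))
        (continuous_pow 2).aestronglyMeasurable ?_
      filter_upwards [hCae] with ξ hξ
      rw [Real.norm_eq_abs, abs_pow]
      exact pow_le_pow_left₀ (abs_nonneg _) hξ 2
    have hmain_int : Integrable (fun ξ => k0 + k1 * ξ + k2 * ξ ^ 2) η :=
      ((integrable_const k0).add (hxi.const_mul k1)).add (hxi2.const_mul k2)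
    have hIint : Integrable I η := by
      refine Integrable.mono' (integrable_const
        (|k0| + |k1| * C + |k2| * C ^ 2 + (L : ℝ) * M ^ 3 * F * (1 + C) ^ 3)) hImeas ?_
      filter_upwards [hCae] with ξ hξ
      rw [Real.norm_eq_abs]
      have h1 := hr ξ
      have hhx : |h + ξ| ≤ 1 + C :=
        le_trans (abs_add_le _ _) (by rw [abs_of_nonneg hh0]; exact add_le_add hh1 hξ)
      have hhx3 : |h + ξ| ^ 3 ≤ (1 + C) ^ 3 := pow_le_pow_left₀ (abs_nonneg _) hhx 3
      have h3 : h ^ 3 ≤ 1 := by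
        first
        | exact pow_le_one₀ hh0 hh1
        | exact pow_le_one 3 hh0 hh1
        | exact pow_le_one _ hh0 hh1
      have hLMF : (0 : ℝ) ≤ (L : ℝ) * M ^ 3 * F := by positivity
      have e0 : |I ξ| = |(k0 + k1 * ξ + k2 * ξ ^ 2) + (I ξ - (k0 + k1 * ξ + k2 * ξ ^ 2))| := by
        congr 1
        ring
      have e1 : |k0 + k1 * ξ + k2 * ξ ^ 2| ≤ |k0| + |k1| * C + |k2| * C ^ 2 := by
        have t1 : |k1 * ξ| ≤ |k1| * C := by
          rw [abs_mul]
          exact mul_le_mul_of_nonneg_left hξ (abs_nonneg _)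
        have t2 : |k2 * ξ ^ 2| ≤ |k2| * C ^ 2 := by
          rw [abs_mul, abs_pow]
          exact mul_le_mul_of_nonneg_left (pow_le_pow_left₀ (abs_nonneg _) hξ 2) (abs_nonneg _)
        calc |k0 + k1 * ξ + k2 * ξ ^ 2| ≤ |k0 + k1 * ξ| + |k2 * ξ ^ 2| := abs_add_le _ _
          _ ≤ |k0| + |k1 * ξ| + |k2 * ξ ^ 2| := by
              have := abs_add_le k0 (k1 * ξ)
              linarith
          _ ≤ |k0| + |k1| * C + |k2| * C ^ 2 := by linarith
      have e2 : ((L : ℝ) * M ^ 3 * F * h ^ 3) * |h + ξ| ^ 3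
          ≤ (L : ℝ) * M ^ 3 * F * (1 + C) ^ 3 := by
        have t1 : (L : ℝ) * M ^ 3 * F * h ^ 3 ≤ (L : ℝ) * M ^ 3 * F :=
          mul_le_of_le_one_right hLMF h3
        calc ((L : ℝ) * M ^ 3 * F * h ^ 3) * |h + ξ| ^ 3
            ≤ ((L : ℝ) * M ^ 3 * F) * |h + ξ| ^ 3 :=
              mul_le_mul_of_nonneg_right t1 (pow_nonneg (abs_nonneg _) 3)
          _ ≤ ((L : ℝ) * M ^ 3 * F) * (1 + C) ^ 3 :=
              mul_le_mul_of_nonneg_left hhx3 hLMF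
      rw [e0]
      calc |(k0 + k1 * ξ + k2 * ξ ^ 2) + (I ξ - (k0 + k1 * ξ + k2 * ξ ^ 2))|
          ≤ |k0 + k1 * ξ + k2 * ξ ^ 2| + |I ξ - (k0 + k1 * ξ + k2 * ξ ^ 2)| := abs_add_le _ _
        _ ≤ (|k0| + |k1| * C + |k2| * C ^ 2) + (L : ℝ) * M ^ 3 * F * (1 + C) ^ 3 := by
            have := le_trans h1 e2
            linarith
        _ = |k0| + |k1| * C + |k2| * C ^ 2 + (L : ℝ) * M ^ 3 * F * (1 + C) ^ 3 := by ring
    -- compute the integral of the main part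
    have hmean_int : ∫ ξ, (k0 + k1 * ξ + k2 * ξ ^ 2) ∂η = k0 + k2 * σ ^ 2 := by
      have hint01 : Integrable (fun ξ : ℝ => k0 + k1 * ξ) η :=
        (integrable_const k0).add (hxi.const_mul k1)
      rw [integral_add hint01 (hxi2.const_mul k2),
        integral_add (integrable_const k0) (hxi.const_mul k1),
        integral_const_mul, integral_const_mul, hmean, hvar, integral_const]
      simp [measure_univ]
    have hsplit : ∫ ξ, I ξ ∂η
        = (k0 + k2 * σ ^ 2) + ∫ ξ, (I ξ - (k0 + k1 * ξ + k2 * ξ ^ 2)) ∂η := by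
      have e : ∫ ξ, I ξ ∂η = ∫ ξ, ((k0 + k1 * ξ + k2 * ξ ^ 2)
          + (I ξ - (k0 + k1 * ξ + k2 * ξ ^ 2))) ∂η := by
        apply integral_congr_ae
        filter_upwards with ξ
        ring
      have hsub : Integrable (fun ξ => I ξ - (k0 + k1 * ξ + k2 * ξ ^ 2)) η :=
        hIint.sub hmain_int
      rw [e, integral_add hmain_int hsub, hmean_int]
    have herr : |∫ ξ, (I ξ - (k0 + k1 * ξ + k2 * ξ ^ 2)) ∂η|
        ≤ ((L : ℝ) * M ^ 3 * F * h ^ 3) * (1 + C) ^ 3 := by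
      have hb : ‖∫ ξ, (I ξ - (k0 + k1 * ξ + k2 * ξ ^ 2)) ∂η‖
          ≤ ∫ _ξ, ((L : ℝ) * M ^ 3 * F * h ^ 3) * (1 + C) ^ 3 ∂η := by
        refine norm_integral_le_of_norm_le (integrable_const _) ?_
        filter_upwards [hCae] with ξ hξ
        rw [Real.norm_eq_abs]
        refine le_trans (hr ξ) ?_
        have hhx : |h + ξ| ≤ 1 + C :=
          le_trans (abs_add_le _ _) (by rw [abs_of_nonneg hh0]; exact add_le_add hh1 hξ)
        have hhx3 : |h + ξ| ^ 3 ≤ (1 + C) ^ 3 := pow_le_pow_left₀ (abs_nonneg _) hhx 3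
        exact mul_le_mul_of_nonneg_left hhx3 (by positivity)
      rw [integral_const] at hb
      simp only [probReal_univ, one_smul] at hb
      rw [Real.norm_eq_abs] at hb
      exact hb
    -- now the final computation
    rw [hsplit]
    set E := ∫ ξ, (I ξ - (k0 + k1 * ξ + k2 * ξ ^ 2)) ∂η with hE
    have hk0' : k0 = -(ε * c) * A + (ε * c) ^ 2 * B / 2 := by
      rw [hk0, show h ^ 4 = (h ^ 2) ^ 2 by ring, hh2]
      try ring
    have hk2' : k2 = ε * c * B / 2 := by rw [hk2, hh2]
    have hmainval : 1 / ε * ((k0 + k2 * σ ^ 2) + E) - (-c * A + σ ^ 2 * c / 2 * B)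
        = 1 / ε * E + ε * (c ^ 2 * B / 2) := by
      rw [hk0', hk2']
      field_simp
      ring
    rw [hmainval]
    have hεpos : (0 : ℝ) < 1 / ε := by positivity
    calc |1 / ε * E + ε * (c ^ 2 * B / 2)|
        ≤ |1 / ε * E| + |ε * (c ^ 2 * B / 2)| := abs_add_le _ _
      _ = 1 / ε * |E| + ε * |c ^ 2 * B / 2| := by
          rw [abs_mul, abs_mul, abs_of_pos hεpos, abs_of_pos hε1]
      _ ≤ 1 / ε * (((L : ℝ) * M ^ 3 * F * h ^ 3) * (1 + C) ^ 3)
          + Real.sqrt ε * |c ^ 2 * B / 2| := by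
          refine add_le_add (mul_le_mul_of_nonneg_left herr hεpos.le) ?_
          exact mul_le_mul_of_nonneg_right hεe (abs_nonneg _)
      _ ≤ ((L : ℝ) * M ^ 3 * F * (1 + C) ^ 3 * c) * Real.sqrt ε
          + |c ^ 2 * B / 2| * Real.sqrt ε := by
          have e1 : 1 / ε * (((L : ℝ) * M ^ 3 * F * h ^ 3) * (1 + C) ^ 3)
              = ((L : ℝ) * M ^ 3 * F * (1 + C) ^ 3) * (h ^ 2 * h / ε) := by ring
          have e2 : h ^ 2 * h / ε = c * h := by
            rw [hh2]
            field_simp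
          rw [e1, e2]
          refine add_le_add ?_ (le_of_eq (mul_comm _ _))
          calc ((L : ℝ) * M ^ 3 * F * (1 + C) ^ 3) * (c * h)
              ≤ ((L : ℝ) * M ^ 3 * F * (1 + C) ^ 3) * (c * Real.sqrt ε) := by
                refine mul_le_mul_of_nonneg_left ?_ (by positivity)
                exact mul_le_mul_of_nonneg_left hhe hc0.le
            _ = ((L : ℝ) * M ^ 3 * F * (1 + C) ^ 3 * c) * Real.sqrt ε := by ring
      _ = K * Real.sqrt ε := by rw [hKdef]; ring
  -- final assembly
  have h0 : Tendsto (fun ε : ℝ => K * Real.sqrt ε) (nhdsWithin 0 (Set.Ioi 0)) (nhds 0) := by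
    have : Tendsto (fun ε : ℝ => K * Real.sqrt ε) (nhds 0) (nhds (K * Real.sqrt 0)) :=
      ((continuous_const.mul Real.continuous_sqrt).tendsto 0)
    simpa using this.mono_left nhdsWithin_le_nhds
  have hdiff : Tendsto (fun ε : ℝ =>
      (1 / ε * ∫ ξ, (∫ v in u..Vmax,
        (φ (v - Real.sqrt (ε * c) * ΔB v * (Real.sqrt (ε * c) + ξ)) - φ v) * f v) ∂η)
      - (-c * A + σ ^ 2 * c / 2 * B)) (nhdsWithin 0 (Set.Ioi 0)) (nhds 0) := by
    apply squeeze_zero_norm' ?_ h0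
    filter_upwards [Ioo_mem_nhdsGT_of_mem (Set.left_mem_Ico.mpr one_pos)] with ε hε
    rw [Real.norm_eq_abs]
    exact key ε hε.1 hε.2
  have hfin := hdiff.add (tendsto_const_nhds (x := -c * A + σ ^ 2 * c / 2 * B))
  simpa using hfin
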